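/- (Evaluation of the constant c_0(s).) For every s ∈ (0,1): s² ∫_0^π (cos(θ/2))^{2s−1} (sin θ)^{1−2s} (cos θ)² dθ = s² · 2^{−1−2s} · √π · (7 + 4s(s−2)) · Γ(1−s) / Γ(7/2 − s), where Γ is the Gamma function. (This quantity is the constant c_0(s) appearing in the free boundary condition; in particular c_0(1/2) = π/8.) -/

import Mathlib

open Set intervalIntegral

open MeasureTheory Real


noncomputable def c0g (s : ℝ) : ℝ → ℝ :=
  fun x => (2:ℝ) ^ (1 - 2*s) * (x ^ (-s) * (1-x) ^ (-(1/2:ℝ)) * (1-2*x)^2)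

noncomputable def c0f : ℝ → ℝ := fun θ => (1 - Real.cos θ)/2

lemma c0f_hasDerivAt (x : ℝ) : HasDerivAt c0f (Real.sin x / 2) x := by
  refine (((Real.hasDerivAt_cos x).const_sub 1).div_const 2).congr_deriv ?_
  ring

lemma c0f_mem_Icc (θ : ℝ) : c0f θ ∈ Icc (0:ℝ) 1 := by
  constructor
  · simp only [c0f]; linarith [Real.cos_le_one θ]
  · simp only [c0f]; linarith [Real.neg_one_le_cos θ]

lemma c0f_mem_Ioo {θ : ℝ} (hθ : θ ∈ Ioo 0 Real.pi) : c0f θ ∈ Ioo (0:ℝ) 1 := by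
  have hsu : 0 < Real.sin (θ/2) :=
    Real.sin_pos_of_pos_of_lt_pi (by linarith [hθ.1]) (by linarith [hθ.2, Real.pi_pos])
  have hcu : 0 < Real.cos (θ/2) :=
    Real.cos_pos_of_mem_Ioo ⟨by linarith [hθ.1, Real.pi_pos], by linarith [hθ.2]⟩
  have h2 := Real.cos_two_mul (θ/2)
  rw [show 2*(θ/2) = θ by ring] at h2
  have hp := Real.sin_sq_add_cos_sq (θ/2)
  constructor
  · simp only [c0f]; nlinarith
  · simp only [c0f]; nlinarith

lemma c0f_injOn : InjOn c0f (Ioo 0 Real.pi) := by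
  intro a ha b hb hab
  simp only [c0f] at hab
  exact Real.injOn_cos ⟨ha.1.le, ha.2.le⟩ ⟨hb.1.le, hb.2.le⟩ (by linarith)

lemma c0g_continuousOn (s : ℝ) : ContinuousOn (c0g s) (Ioo 0 1) := by
  refine continuousOn_const.mul (ContinuousOn.mul (ContinuousOn.mul ?_ ?_) ?_)
  · exact continuousOn_id.rpow_const fun x hx => Or.inl hx.1.ne'
  · refine (continuousOn_const.sub continuousOn_id).rpow_const fun x hx => Or.inl ?_
    have : x < 1 := hx.2
    simp only [Pi.sub_apply, id_eq]
    intro h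
    nlinarith
  · exact ((continuous_const.sub (continuous_const.mul continuous_id)).pow 2).continuousOn

lemma beta_real_integrable' {a b : ℝ} (ha : -1 < a) (hb : -1 < b) :
    IntervalIntegrable (fun x : ℝ => x ^ a * (1 - x) ^ b) volume 0 1 := by
  have h := Complex.betaIntegral_convergent (u := (a:ℂ) + 1) (v := (b:ℂ) + 1)
    (by simpa using by linarith) (by simpa using by linarith)
  have h2 : IntervalIntegrable (fun x : ℝ => ((x ^ a * (1 - x) ^ b : ℝ) : ℂ)) volume 0 1 := by
    apply h.congr
    have hI : uIoc (0:ℝ) 1 = Ioc (0:ℝ) 1 := uIoc_of_le zero_le_one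
    intro x hx
    rw [hI] at hx
    have hx0 : (0:ℝ) ≤ x := hx.1.le
    have hx1 : (0:ℝ) ≤ 1 - x := by linarith [hx.2]
    simp only [add_sub_cancel_right]
    rw [Complex.ofReal_mul, Complex.ofReal_cpow hx0, Complex.ofReal_cpow hx1]
    push_cast
    ring
  rw [intervalIntegrable_iff] at h2 ⊢
  have h3 := h2.re
  simp at h3
  rwa [uIoc_of_le zero_le_one]

lemma c0g_intervalIntegrable {s : ℝ} (hs0 : 0 < s) (hs1 : s < 1) :
    IntervalIntegrable (c0g s) volume 0 1 := by
  have hb := beta_real_integrable' (a := -s) (b := -(1/2:ℝ)) (by linarith) (by norm_num)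
  have hcont : ContinuousOn (fun x : ℝ => (2:ℝ) ^ (1 - 2*s) * (1-2*x)^2) (uIcc (0:ℝ) 1) :=
    (continuous_const.mul
      ((continuous_const.sub (continuous_const.mul continuous_id)).pow 2)).continuousOn
  have h := hb.mul_continuousOn hcont
  apply h.congr
  intro x _
  simp only [c0g]
  ring

lemma c0g_integrableOn_Icc {s : ℝ} (hs0 : 0 < s) (hs1 : s < 1) :
    IntegrableOn (c0g s) (Icc (0:ℝ) 1) := by
  have := (c0g_intervalIntegrable hs0 hs1)
  rwa [intervalIntegrable_iff', uIcc_of_le zero_le_one] at this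

lemma c0_pointwise {s : ℝ} (hs0 : 0 < s) {θ : ℝ} (hθ : θ ∈ Ioo 0 Real.pi) :
    (Real.cos (θ / 2)) ^ (2 * s - 1) * (Real.sin θ) ^ (1 - 2 * s) * (Real.cos θ) ^ 2
      = (Real.sin θ / 2) • (c0g s) (c0f θ) := by
  have hsu : 0 < Real.sin (θ/2) :=
    Real.sin_pos_of_pos_of_lt_pi (by linarith [hθ.1]) (by linarith [hθ.2, Real.pi_pos])
  have hcu : 0 < Real.cos (θ/2) :=
    Real.cos_pos_of_mem_Ioo ⟨by linarith [hθ.1, Real.pi_pos], by linarith [hθ.2]⟩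
  have h2 := Real.cos_two_mul (θ/2)
  rw [show 2*(θ/2) = θ by ring] at h2
  have hp := Real.sin_sq_add_cos_sq (θ/2)
  have hsθ : Real.sin θ = 2 * Real.sin (θ/2) * Real.cos (θ/2) := by
    have := Real.sin_two_mul (θ/2)
    rw [show 2*(θ/2) = θ by ring] at this
    linarith
  have hfθ : c0f θ = Real.sin (θ/2)^2 := by simp only [c0f]; linarith
  have h1f : (1:ℝ) - Real.sin (θ/2)^2 = Real.cos (θ/2)^2 := by linarith
  have hcθ : (1:ℝ) - 2*Real.sin (θ/2)^2 = Real.cos θ := by linarith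
  have e1 : (Real.sin (θ/2)^2 : ℝ) ^ (-s) = Real.sin (θ/2) ^ (-(2*s)) := by
    rw [← Real.rpow_natCast (Real.sin (θ/2)) 2, ← Real.rpow_mul hsu.le]
    norm_num
  have e2 : (Real.cos (θ/2)^2 : ℝ) ^ (-(1/2:ℝ)) = (Real.cos (θ/2))⁻¹ := by
    rw [← Real.rpow_natCast (Real.cos (θ/2)) 2, ← Real.rpow_mul hcu.le]
    norm_num [Real.rpow_neg_one]
  have e3 : Real.sin θ ^ (1-2*s)
      = (2:ℝ)^(1-2*s) * Real.sin (θ/2)^(1-2*s) * Real.cos (θ/2)^(1-2*s) := by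
    rw [hsθ, show (2:ℝ)*Real.sin (θ/2)*Real.cos (θ/2)
        = 2*(Real.sin (θ/2)*Real.cos (θ/2)) by ring,
      Real.mul_rpow (by norm_num) (mul_nonneg hsu.le hcu.le),
      Real.mul_rpow hsu.le hcu.le]
    ring
  have e4 : Real.cos (θ/2)^(2*s-1) * Real.cos (θ/2)^(1-2*s) = 1 := by
    rw [← Real.rpow_add hcu]
    norm_num
  have e5 : Real.sin (θ/2) * Real.sin (θ/2)^(-(2*s)) = Real.sin (θ/2)^(1-2*s) := by
    nth_rewrite 1 [← Real.rpow_one (Real.sin (θ/2))]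
    rw [← Real.rpow_add hsu, show (1 + -(2*s):ℝ) = 1-2*s by ring]
  have hR : (Real.sin θ / 2) • (c0g s) (c0f θ)
      = (2:ℝ)^(1-2*s) * Real.sin (θ/2)^(1-2*s) * Real.cos θ^2 := by
    simp only [smul_eq_mul, c0g]
    rw [hfθ, h1f, e1, e2, hcθ, hsθ, ← e5]
    field_simp
  rw [hR, e3]
  calc Real.cos (θ/2)^(2*s-1) * ((2:ℝ)^(1-2*s) * Real.sin (θ/2)^(1-2*s)
        * Real.cos (θ/2)^(1-2*s)) * Real.cos θ^2
      = (Real.cos (θ/2)^(2*s-1) * Real.cos (θ/2)^(1-2*s))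
        * ((2:ℝ)^(1-2*s) * Real.sin (θ/2)^(1-2*s) * Real.cos θ^2) := by ring
    _ = (2:ℝ)^(1-2*s) * Real.sin (θ/2)^(1-2*s) * Real.cos θ^2 := by rw [e4]; ring

lemma c0_subst {s : ℝ} (hs0 : 0 < s) (hs1 : s < 1) :
    (∫ θ in (0:ℝ)..Real.pi, (Real.sin θ / 2) • (c0g s) (c0f θ))
      = ∫ x in (0:ℝ)..1, c0g s x := by
  have hπ := Real.pi_pos
  have himgIoo : c0f '' Ioo 0 Real.pi ⊆ Ioo (0:ℝ) 1 := by
    rintro y ⟨θ, hθ, rfl⟩; exact c0f_mem_Ioo hθ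
  have himgIcc : c0f '' uIcc 0 Real.pi ⊆ Icc (0:ℝ) 1 := by
    rintro y ⟨θ, _, rfl⟩; exact c0f_mem_Icc θ
  have key := intervalIntegral.integral_comp_smul_deriv''' (a := 0) (b := Real.pi)
    (f := c0f) (f' := fun θ => Real.sin θ / 2) (g := c0g s)
    ((continuous_const.sub Real.continuous_cos).div_const 2).continuousOn
    (fun x _ => (c0f_hasDerivAt x).hasDerivWithinAt)
    ?hgc ?hg1 ?hg2
  case hgc =>
    rw [min_eq_left hπ.le, max_eq_right hπ.le]
    exact (c0g_continuousOn s).mono himgIoo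
  case hg1 => exact (c0g_integrableOn_Icc hs0 hs1).mono_set himgIcc
  case hg2 =>
    rw [uIcc_of_le hπ.le, integrableOn_Icc_iff_integrableOn_Ioo]
    have hiff := integrableOn_image_iff_integrableOn_abs_deriv_smul
      (f := c0f) (f' := fun θ => Real.sin θ / 2) measurableSet_Ioo
      (fun x _ => (c0f_hasDerivAt x).hasDerivWithinAt) c0f_injOn (c0g s)
    have himg : IntegrableOn (c0g s) (c0f '' Ioo 0 Real.pi) :=
      (c0g_integrableOn_Icc hs0 hs1).mono_set (himgIoo.trans Ioo_subset_Icc_self)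
    refine (hiff.mp himg).congr_fun (fun x hx => ?_) measurableSet_Ioo
    have hsin : 0 ≤ Real.sin x := Real.sin_nonneg_of_nonneg_of_le_pi hx.1.le hx.2.le
    simp only [Function.comp]
    rw [abs_of_nonneg (by linarith : (0:ℝ) ≤ Real.sin x / 2)]
  have hf0 : c0f 0 = 0 := by simp [c0f]
  have hfπ : c0f Real.pi = 1 := by simp [c0f]
  rw [hf0, hfπ] at key
  simpa [Function.comp] using key

lemma beta_real_eval {a b : ℝ} (ha : -1 < a) (hb : -1 < b) :
    ∫ x in (0:ℝ)..1, x ^ a * (1 - x) ^ b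
      = Real.Gamma (a + 1) * Real.Gamma (b + 1) / Real.Gamma (a + b + 2) := by
  have key := Complex.Gamma_mul_Gamma_eq_betaIntegral (s := (a:ℂ) + 1) (t := (b:ℂ) + 1)
    (by simpa using by linarith) (by simpa using by linarith)
  have hBeta : Complex.betaIntegral ((a:ℂ)+1) ((b:ℂ)+1)
      = ((∫ x in (0:ℝ)..1, x ^ a * (1 - x) ^ b : ℝ) : ℂ) := by
    rw [Complex.betaIntegral]
    rw [intervalIntegral.integral_congr (g := fun x : ℝ => ((x ^ a * (1 - x) ^ b : ℝ) : ℂ)) ?_]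
    · exact intervalIntegral.integral_ofReal
    intro x hx
    rw [uIcc_of_le zero_le_one] at hx
    have hx1 : (0:ℝ) ≤ 1 - x := by linarith [hx.2]
    simp only [add_sub_cancel_right]
    rw [Complex.ofReal_mul, Complex.ofReal_cpow hx.1, Complex.ofReal_cpow hx1]
    push_cast
    ring
  rw [hBeta] at key
  have hab : ((a:ℂ)+1) + ((b:ℂ)+1) = ((a + b + 2 : ℝ) : ℂ) := by push_cast; ring
  have h1 : ((a:ℂ)+1) = ((a + 1 : ℝ) : ℂ) := by push_cast; ring
  have h2 : ((b:ℂ)+1) = ((b + 1 : ℝ) : ℂ) := by push_cast; ring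
  rw [hab, h1, h2, Complex.Gamma_ofReal, Complex.Gamma_ofReal, Complex.Gamma_ofReal] at key
  have hG : (0:ℝ) < Real.Gamma (a + b + 2) := Real.Gamma_pos_of_pos (by linarith)
  have key' : Real.Gamma (a+1) * Real.Gamma (b+1)
      = Real.Gamma (a+b+2) * ∫ x in (0:ℝ)..1, x ^ a * (1 - x) ^ b := by
    exact_mod_cast key
  field_simp
  linarith [key']

lemma c0g_integral_eq {s : ℝ} (hs0 : 0 < s) (hs1 : s < 1) :
    ∫ x in (0:ℝ)..1, c0g s x
      = (2:ℝ)^(1-2*s) * ((∫ x in (0:ℝ)..1, x^(-s)*(1-x)^(-(1/2:ℝ)))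
        - 4 * (∫ x in (0:ℝ)..1, x^(1-s)*(1-x)^(-(1/2:ℝ)))
        + 4 * (∫ x in (0:ℝ)..1, x^(2-s)*(1-x)^(-(1/2:ℝ)))) := by
  have hb1 := beta_real_integrable' (a := -s) (b := -(1/2:ℝ)) (by linarith) (by norm_num)
  have hb2 := beta_real_integrable' (a := 1-s) (b := -(1/2:ℝ)) (by linarith) (by norm_num)
  have hb3 := beta_real_integrable' (a := 2-s) (b := -(1/2:ℝ)) (by linarith) (by norm_num)
  have hcong : EqOn (c0g s)
      (fun x => (2:ℝ)^(1-2*s) * ((x^(-s)*(1-x)^(-(1/2:ℝ)))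
        - 4*(x^(1-s)*(1-x)^(-(1/2:ℝ))) + 4*(x^(2-s)*(1-x)^(-(1/2:ℝ))))) (uIcc 0 1) := by
    intro x hx
    rw [uIcc_of_le zero_le_one] at hx
    rcases eq_or_lt_of_le hx.1 with h0 | h0
    · rw [← h0]
      simp [c0g, Real.zero_rpow (by linarith : -s ≠ 0),
        Real.zero_rpow (by linarith : (1:ℝ)-s ≠ 0),
        Real.zero_rpow (by linarith : (2:ℝ)-s ≠ 0)]
    · have e1 : x^(1-s) = x * x^(-s) := by
        rw [show (1-s:ℝ) = 1 + -s by ring, Real.rpow_add h0, Real.rpow_one]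
      have e2 : x^(2-s) = x * (x * x^(-s)) := by
        rw [show (2-s:ℝ) = 1 + (1 + -s) by ring, Real.rpow_add h0, Real.rpow_add h0,
          Real.rpow_one]
      simp only [c0g]
      rw [e1, e2]
      ring
  rw [intervalIntegral.integral_congr hcong, intervalIntegral.integral_const_mul,
    intervalIntegral.integral_add (hb1.sub (hb2.const_mul 4)) (hb3.const_mul 4),
    intervalIntegral.integral_sub hb1 (hb2.const_mul 4),
    intervalIntegral.integral_const_mul, intervalIntegral.integral_const_mul]

lemma c0_algebra {s G P T C : ℝ} (hT : T ≠ 0) (h2 : (3/2 - s : ℝ) ≠ 0)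
    (h3 : (3/2 - s + 1 : ℝ) ≠ 0) :
    s^2 * (4*C * (G*P/T - 4*((1-s)*G*P/((3/2-s)*T))
        + 4*((1-s+1)*((1-s)*G)*P/((3/2-s+1)*((3/2-s)*T)))))
      = s^2*C*P*(7+4*s*(s-2))*G/((3/2-s+1)*((3/2-s)*T)) := by
  have hD : ((3/2 - s + 1) * ((3/2 - s) * T) : ℝ) ≠ 0 :=
    mul_ne_zero h3 (mul_ne_zero h2 hT)
  have e1 : ∀ a : ℝ, a / T
      = a * ((3/2-s+1)*(3/2-s)) / ((3/2-s+1)*((3/2-s)*T)) := by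
    intro a; rw [div_eq_div_iff hT hD]; ring
  have e2 : ∀ a : ℝ, a / ((3/2-s)*T)
      = a * (3/2-s+1) / ((3/2-s+1)*((3/2-s)*T)) := by
    intro a; rw [div_eq_div_iff (mul_ne_zero h2 hT) hD]; ring
  rw [e1, e2]
  simp only [← mul_div_assoc, div_sub_div_same, ← add_div]
  rw [div_eq_div_iff hD hD]
  ring

/-- **Evaluation of the constant `c₀(s)`**: for every `s ∈ (0,1)`,
`s² ∫₀^π cos(θ/2)^{2s-1} (sin θ)^{1-2s} (cos θ)² dθ
  = s² · 2^{-1-2s} √π (7 + 4s(s-2)) Γ(1-s) / Γ(7/2 - s)`. -/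
theorem c0_evaluation (s : ℝ) (hs : s ∈ Ioo (0 : ℝ) 1) :
    s ^ 2 * (∫ θ in (0:ℝ)..Real.pi,
        (Real.cos (θ / 2)) ^ (2 * s - 1) * (Real.sin θ) ^ (1 - 2 * s) *
          (Real.cos θ) ^ 2)
      = s ^ 2 * (2 : ℝ) ^ (-1 - 2 * s) * Real.sqrt Real.pi *
          (7 + 4 * s * (s - 2)) * Real.Gamma (1 - s) / Real.Gamma (7 / 2 - s) := by
  obtain ⟨hs0, hs1⟩ := hs
  have hπ := Real.pi_pos
  have stepA : (∫ θ in (0:ℝ)..Real.pi,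
        (Real.cos (θ / 2)) ^ (2 * s - 1) * (Real.sin θ) ^ (1 - 2 * s) * (Real.cos θ) ^ 2)
      = ∫ θ in (0:ℝ)..Real.pi, (Real.sin θ / 2) • (c0g s) (c0f θ) := by
    apply intervalIntegral.integral_congr_ae
    have hπae : ∀ᵐ x : ℝ, x ≠ Real.pi := by
      rw [MeasureTheory.ae_iff]
      simp only [not_not, Set.setOf_eq_eq_singleton]
      exact measure_singleton _
    filter_upwards [hπae] with θ hθne hmem
    rw [uIoc_of_le hπ.le] at hmem
    exact c0_pointwise hs0 ⟨hmem.1, lt_of_le_of_ne hmem.2 hθne⟩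
  have h1sne : (1 - s : ℝ) ≠ 0 := by linarith
  have h2sne : (2 - s : ℝ) ≠ 0 := by linarith
  have h32 : (0:ℝ) < 3/2 - s := by linarith
  have h52 : (0:ℝ) < 5/2 - s := by linarith
  have hT : (0:ℝ) < Real.Gamma (3/2 - s) := Real.Gamma_pos_of_pos h32
  rw [stepA, c0_subst hs0 hs1, c0g_integral_eq hs0 hs1,
    beta_real_eval (by linarith) (by norm_num),
    beta_real_eval (by linarith) (by norm_num),
    beta_real_eval (by linarith) (by norm_num),
    show (-s + 1 : ℝ) = 1 - s by ring,
    show (-(1/2:ℝ) + 1) = 1/2 by norm_num,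
    Real.Gamma_one_half_eq,
    show (-s + -(1/2) + 2 : ℝ) = 3/2 - s by ring,
    Real.Gamma_add_one h1sne,
    show (1 - s + -(1/2) + 2 : ℝ) = (3/2 - s) + 1 by ring,
    Real.Gamma_add_one h32.ne',
    Real.Gamma_add_one h2sne,
    show (2 - s : ℝ) = (1 - s) + 1 by ring,
    Real.Gamma_add_one h1sne,
    show (1 - s + 1 + -(1/2) + 2 : ℝ) = (5/2 - s) + 1 by ring,
    Real.Gamma_add_one h52.ne',
    show (7/2 - s : ℝ) = (5/2 - s) + 1 by ring,
    Real.Gamma_add_one h52.ne',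
    show (5/2 - s : ℝ) = (3/2 - s) + 1 by ring,
    Real.Gamma_add_one h32.ne',
    show ((2:ℝ)) ^ (1 - 2*s) = 4 * (2:ℝ) ^ (-1 - 2*s) by
      rw [show (1 - 2*s : ℝ) = 1 + (1 + (-1 - 2*s)) by ring, Real.rpow_add two_pos,
        Real.rpow_add two_pos, Real.rpow_one]; ring]
  have hA : ((3:ℝ)/2 - s + 1) ≠ 0 := by intro h; nlinarith
  exact c0_algebra hT.ne' h32.ne' hA
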